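/- Let H > 0 and let K be a positive natural number; set h = 2H/K and nodes x_i = −H + i·h for i = 0, …, K. Let ẽ : [−H, H] → ℝ be the piecewise-linear interpolant of exp, i.e., on each subinterval [x_i, x_{i+1}] it is the affine function agreeing with exp at x_i and x_{i+1}. Then for every x ∈ [−H, H], |ẽ(x) − exp(x)| ≤ (h²/8)·exp(h)·exp(x). -/

import Mathlib

open Set

lemma pwl_deriv_aux (b : ℝ) : deriv (fun y => Real.exp b / 2 * y ^ 2 - Real.exp y)
    = fun y => Real.exp b * y - Real.exp y := by
  funext y
  have h1 : HasDerivAt (fun z : ℝ => Real.exp b / 2 * z ^ 2 - Real.exp z)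
      (Real.exp b / 2 * (2 * y ^ 1) - Real.exp y) y :=
    (((hasDerivAt_pow 2 y).const_mul (Real.exp b / 2)).sub (Real.hasDerivAt_exp y))
  rw [h1.deriv]; ring

lemma pwl_phi_convex (b : ℝ) (a : ℝ) :
    ConvexOn ℝ (Set.Icc a b) (fun y => Real.exp b / 2 * y ^ 2 - Real.exp y) := by
  apply convexOn_of_deriv2_nonneg' (convex_Icc a b)
  · intro y hy
    exact (((differentiable_pow 2).const_mul _).sub Real.differentiable_exp).differentiableAt.differentiableWithinAt
  · rw [pwl_deriv_aux]
    intro y hy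
    exact ((differentiable_id.const_mul _).sub Real.differentiable_exp).differentiableAt.differentiableWithinAt
  · intro y hy
    have hd2 : deriv^[2] (fun y => Real.exp b / 2 * y ^ 2 - Real.exp y) y
        = Real.exp b - Real.exp y := by
      rw [Function.iterate_succ, Function.iterate_one, Function.comp_apply, pwl_deriv_aux]
      have h1 : HasDerivAt (fun z : ℝ => Real.exp b * z - Real.exp z)
          (Real.exp b * 1 - Real.exp y) y :=
        ((hasDerivAt_id y).const_mul (Real.exp b)).sub (Real.hasDerivAt_exp y)
      rw [h1.deriv]; ring
    rw [hd2]
    have := Real.exp_le_exp.2 hy.2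
    linarith

lemma pwl_chord_bound (a h : ℝ) (hh : 0 < h) (x : ℝ) (hx : x ∈ Set.Icc a (a + h)) :
    0 ≤ Real.exp a + (Real.exp (a + h) - Real.exp a) / h * (x - a) - Real.exp x ∧
    Real.exp a + (Real.exp (a + h) - Real.exp a) / h * (x - a) - Real.exp x
      ≤ h ^ 2 / 8 * Real.exp (a + h) := by
  set b := a + h with hb
  set μ := (b - x) / h with hμ
  set ν := (x - a) / h with hν
  have hμ0 : 0 ≤ μ := div_nonneg (by linarith [hx.2]) hh.le
  have hν0 : 0 ≤ ν := div_nonneg (by linarith [hx.1]) hh.le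
  have hμν : μ + ν = 1 := by rw [hμ, hν, hb]; field_simp; ring
  have hcomb : μ • a + ν • b = x := by
    simp only [smul_eq_mul]
    rw [hμ, hν, hb]; field_simp
    ring
  have hlin : Real.exp a + (Real.exp b - Real.exp a) / h * (x - a)
      = μ * Real.exp a + ν * Real.exp b := by
    have hμ1 : μ = 1 - ν := by linarith
    rw [hμ1, hν]
    field_simp
    ring
  constructor
  · have hcx := convexOn_exp.2 (mem_univ a) (mem_univ b) hμ0 hν0 hμν
    rw [hcomb] at hcx
    simp only [smul_eq_mul] at hcx
    rw [hlin]
    linarith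
  · have hφ := (pwl_phi_convex b a).2 (⟨le_refl a, by linarith⟩ : a ∈ Icc a b)
      (⟨by linarith, le_refl b⟩ : b ∈ Icc a b) hμ0 hν0 hμν
    rw [hcomb] at hφ
    simp only [smul_eq_mul] at hφ
    have hxval : x = μ * a + ν * b := by
      simpa only [smul_eq_mul] using hcomb.symm
    have hx2 : μ * a ^ 2 + ν * b ^ 2 - x ^ 2 = μ * ν * h ^ 2 := by
      have hν1 : ν = 1 - μ := by linarith
      rw [hxval, hν1, hb]; ring
    have hμν4 : μ * ν ≤ 1 / 4 := by nlinarith [sq_nonneg (μ - ν)]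
    have hexpb : 0 < Real.exp b := Real.exp_pos b
    have hφ' : μ * Real.exp a + ν * Real.exp b - Real.exp x
        ≤ Real.exp b / 2 * (μ * ν * h ^ 2) := by
      have hx2' : Real.exp b / 2 * (μ * a ^ 2 + ν * b ^ 2 - x ^ 2)
          = Real.exp b / 2 * (μ * ν * h ^ 2) := by rw [hx2]
      linarith [hφ, hx2']
    have h4 : Real.exp b / 2 * (μ * ν * h ^ 2) ≤ h ^ 2 / 8 * Real.exp b := by
      nlinarith [hμν4, mul_nonneg hexpb.le (sq_nonneg h)]
    rw [hlin]
    linarith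

/-- PWL-Exp relative error bound (Lemma 1): the piecewise-linear interpolant of `exp`
on `[-H, H]` with `K` equal subintervals of width `h = 2H/K` satisfies
`|ẽ(x) - exp x| ≤ (h²/8)·e^h·exp x` at every point of the interval. -/
theorem pwl_exp_relative_error_bound
    (H : ℝ) (hH : 0 < H) (K : ℕ) (hK : 0 < K)
    (h : ℝ) (hh : h = 2 * H / K)
    (node : ℕ → ℝ) (hnode : ∀ i : ℕ, node i = -H + i * h)
    (etil : ℝ → ℝ)
    (hinterp : ∀ i : ℕ, i < K → ∀ x ∈ Set.Icc (node i) (node (i + 1)),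
      etil x = Real.exp (node i) +
        (Real.exp (node (i + 1)) - Real.exp (node i)) / h * (x - node i)) :
    ∀ x ∈ Set.Icc (-H) H,
      |etil x - Real.exp x| ≤ (h ^ 2 / 8) * Real.exp h * Real.exp x := by
  have hK0 : (0 : ℝ) < K := by exact_mod_cast hK
  have hhpos : 0 < h := by rw [hh]; positivity
  have hKh : (K : ℝ) * h = 2 * H := by rw [hh]; field_simp
  intro x hx
  set n := ⌊(x + H) / h⌋₊ with hn
  set i := min n (K - 1) with hi
  have hiK : i < K := lt_of_le_of_lt (min_le_right _ _) (Nat.sub_lt hK one_pos)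
  have hq0 : 0 ≤ (x + H) / h := div_nonneg (by linarith [hx.1]) hhpos.le
  have hile : (i : ℝ) ≤ (x + H) / h :=
    le_trans (by exact_mod_cast Nat.cast_le.2 (min_le_left n (K - 1))) (Nat.floor_le hq0)
  have hlow : node i ≤ x := by
    rw [hnode]
    have h2 := (le_div_iff₀ hhpos).1 hile
    linarith
  have hup : x ≤ node (i + 1) := by
    rw [hnode]
    by_cases hc : n ≤ K - 1
    · have hieq : i = n := min_eq_left hc
      have hfl : (x + H) / h < n + 1 := Nat.lt_floor_add_one _
      have := (div_lt_iff₀ hhpos).1 hfl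
      rw [hieq]
      push_cast
      nlinarith
    · have hieq : i = K - 1 := min_eq_right (le_of_not_ge hc)
      have hieq2 : i + 1 = K := by omega
      rw [hieq2]
      nlinarith [hx.2]
  have hnn : node (i + 1) = node i + h := by
    rw [hnode, hnode]; push_cast; ring
  have hetil := hinterp i hiK x ⟨hlow, hup⟩
  have hcb := pwl_chord_bound (node i) h hhpos x (by rw [← hnn]; exact ⟨hlow, hup⟩)
  rw [← hnn] at hcb
  rw [hetil, abs_of_nonneg hcb.1]
  have hfin : Real.exp (node (i + 1)) = Real.exp h * Real.exp (node i) := by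
    rw [hnn, ← Real.exp_add]; ring_nf
  have hmono : Real.exp (node i) ≤ Real.exp x := Real.exp_le_exp.2 hlow
  calc Real.exp (node i) + (Real.exp (node (i + 1)) - Real.exp (node i)) / h * (x - node i)
        - Real.exp x ≤ h ^ 2 / 8 * Real.exp (node (i + 1)) := hcb.2
    _ = h ^ 2 / 8 * Real.exp h * Real.exp (node i) := by rw [hfin]; ring
    _ ≤ h ^ 2 / 8 * Real.exp h * Real.exp x := by
        apply mul_le_mul_of_nonneg_left hmono
        positivity
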